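/- For every finite simple graph G and every k ≥ 1: if G admits a fuse-k-expression (i.e., some fuse-k-expression evaluates to a k-labeled graph whose underlying simple graph is isomorphic to G), then G admits a multi-(k+1)-expression. Consequently mcw(G) ≤ fw(G) + 1, where fw(G) is the least k such that G admits a fuse-k-expression and mcw(G) is the least k such that G admits a multi-k-expression. -/

import Mathlib

/-! ### `k`-labeled graphs and the basic operations on them -/

/-- A `k`-labeled graph: a simple graph together with a labeling of its vertices
by labels from `Fin k`. -/
structure LGraph (k : ℕ) where
  V : Type
  G : SimpleGraph V
  lab : V → Fin k

namespace LGraph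

variable {k : ℕ}

/-- The join operation `η_{a,b}`: add all edges between vertices of label `a`
and vertices of label `b`. -/
def join (a b : Fin k) (H : LGraph k) : LGraph k where
  V := H.V
  G :=
    { Adj := fun u v =>
        H.G.Adj u v ∨ (u ≠ v ∧ ((H.lab u = a ∧ H.lab v = b) ∨ (H.lab u = b ∧ H.lab v = a)))
      symm := by
        constructor
        intro u v h
        rcases h with h | ⟨hne, h⟩
        · exact Or.inl (H.G.adj_symm h)
        · refine Or.inr ⟨hne.symm, ?_⟩
          rcases h with ⟨h1, h2⟩ | ⟨h1, h2⟩
          · exact Or.inr ⟨h2, h1⟩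
          · exact Or.inl ⟨h2, h1⟩
      loopless := by
        constructor
        intro v h
        rcases h with h | ⟨hne, _⟩
        · exact H.G.irrefl h
        · exact hne rfl }
  lab := H.lab

/-- The relabel operation `ρ_{a→b}`: every vertex of label `a` gets label `b` instead. -/
def relabel (a b : Fin k) (H : LGraph k) : LGraph k where
  V := H.V
  G := H.G
  lab := fun v => if H.lab v = a then b else H.lab v

/-- The fuse operation `θ_i`: replace all vertices of label `i` by a single new vertex
(represented by `none`) of label `i` whose neighbourhood is the union of their
neighbourhoods. -/
def fuse (i : Fin k) (H : LGraph k) : LGraph k where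
  V := Option {v : H.V // H.lab v ≠ i}
  G :=
    { Adj := fun x y =>
        match x, y with
        | some u, some v => H.G.Adj u.1 v.1
        | some u, none => ∃ w, H.lab w = i ∧ H.G.Adj u.1 w
        | none, some v => ∃ w, H.lab w = i ∧ H.G.Adj w v.1
        | none, none => False
      symm := by
        constructor
        rintro (_ | u) (_ | v) h
        · exact h
        · obtain ⟨w, hw, ha⟩ := h
          exact ⟨w, hw, ha.symm⟩
        · obtain ⟨w, hw, ha⟩ := h
          exact ⟨w, hw, ha.symm⟩
        · exact H.G.adj_symm h
      loopless := by
        constructor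
        rintro (_ | v) h
        · exact h
        · exact H.G.irrefl h }
  lab := fun x =>
    match x with
    | some u => H.lab u.1
    | none => i

/-- Disjoint union `H1 ⊕ H2` of two `k`-labeled graphs. -/
def union (H1 H2 : LGraph k) : LGraph k where
  V := H1.V ⊕ H2.V
  G := H1.G ⊕g H2.G
  lab := Sum.elim H1.lab H2.lab

/-- Label-preserving isomorphism of `k`-labeled graphs. -/
def LIso (H1 H2 : LGraph k) : Prop :=
  ∃ e : H1.G ≃g H2.G, ∀ v, H2.lab (e v) = H1.lab v

/-- The occurrence of the join operator `η_{a,b}` applied to `H` is not useless,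
i.e. it creates at least one new edge. -/
def joinUseful (a b : Fin k) (H : LGraph k) : Prop :=
  ∃ u v : H.V, u ≠ v ∧ H.lab u = a ∧ H.lab v = b ∧ ¬ H.G.Adj u v

/-- The occurrence of the fuse operator `θ_i` applied to `H` is not useless,
i.e. `H` has at least two vertices of label `i`. -/
def fuseUseful (i : Fin k) (H : LGraph k) : Prop :=
  ∃ u v : H.V, u ≠ v ∧ H.lab u = i ∧ H.lab v = i

/-- The occurrence of a relabel operator `ρ_{a→b}` applied to `H` is not useless,
i.e. `H` has a vertex of label `a`. -/
def relabelUseful (a : Fin k) (H : LGraph k) : Prop :=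
  ∃ v : H.V, H.lab v = a

/-- `relabelSeq i [a₁, …, a_q] H = ρ_{a₁→i}(⋯(ρ_{a_q→i}(H))⋯)`. -/
def relabelSeq (i : Fin k) : List (Fin k) → LGraph k → LGraph k
  | [], H => H
  | a :: as, H => relabel a i (relabelSeq i as H)

/-- None of the relabel operators in `relabelSeq i as H` is useless (this includes
that none of them has the form `ρ_{a→a}`). -/
def relabelSeqUseful (i : Fin k) : List (Fin k) → LGraph k → Prop
  | [], _ => True
  | a :: as, H => relabelSeqUseful i as H ∧ a ≠ i ∧ relabelUseful a (relabelSeq i as H)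

end LGraph

/-! ### Fuse-`k`-expressions -/

/-- A fuse-`k`-expression: introduce a vertex, disjoint union, join, relabel, fuse. -/
inductive FuseExpr (k : ℕ) where
  | intro (i : Fin k)
  | union (φ1 φ2 : FuseExpr k)
  | join (i j : Fin k) (φ : FuseExpr k)
  | relabel (i j : Fin k) (φ : FuseExpr k)
  | fuse (i : Fin k) (φ : FuseExpr k)

namespace FuseExpr

variable {k : ℕ}

/-- The single-vertex `k`-labeled graph with label `i`. -/
def singleVertex (i : Fin k) : LGraph k := ⟨PUnit, ⊥, fun _ => i⟩

/-- The `k`-labeled graph `G^φ` obtained by evaluating a fuse-`k`-expression. -/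
def eval : FuseExpr k → LGraph k
  | .intro i => singleVertex i
  | .union φ1 φ2 => LGraph.union φ1.eval φ2.eval
  | .join i j φ => LGraph.join i j φ.eval
  | .relabel i j φ => LGraph.relabel i j φ.eval
  | .fuse i φ => LGraph.fuse i φ.eval

/-- Well-formedness of a fuse-`k`-expression: joins and relabels use two distinct labels,
and every fuse `θ_i` is applied to a graph having a vertex of label `i`. -/
def WF : FuseExpr k → Prop
  | .intro _ => True
  | .union φ1 φ2 => φ1.WF ∧ φ2.WF
  | .join i j φ => i ≠ j ∧ φ.WF
  | .relabel i j φ => i ≠ j ∧ φ.WF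
  | .fuse i φ => φ.WF ∧ ∃ v, φ.eval.lab v = i

end FuseExpr

/-- A graph `G` admits a fuse-`k`-expression if some well-formed fuse-`k`-expression
evaluates to a labeled graph whose underlying simple graph is isomorphic to `G`. -/
def FuseAdmits {V : Type} (k : ℕ) (G : SimpleGraph V) : Prop :=
  ∃ φ : FuseExpr k, φ.WF ∧ Nonempty (φ.eval.G ≃g G)

/-! ### Multi-`k`-labeled graphs and multi-`k`-expressions -/

/-- A multi-`k`-labeled graph: every vertex carries a set of labels from `Fin k`. -/
structure MGraph (k : ℕ) where
  V : Type
  G : SimpleGraph V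
  lab : V → Set (Fin k)

namespace MGraph

variable {k : ℕ}

/-- Multi-join `η_{i,j}`: add all edges between vertices whose label set contains `i`
and vertices whose label set contains `j`. -/
def join (i j : Fin k) (H : MGraph k) : MGraph k where
  V := H.V
  G :=
    { Adj := fun u v =>
        H.G.Adj u v ∨ (u ≠ v ∧ ((i ∈ H.lab u ∧ j ∈ H.lab v) ∨ (j ∈ H.lab u ∧ i ∈ H.lab v)))
      symm := by
        constructor
        intro u v h
        rcases h with h | ⟨hne, h⟩
        · exact Or.inl (H.G.adj_symm h)
        · refine Or.inr ⟨hne.symm, ?_⟩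
          rcases h with ⟨h1, h2⟩ | ⟨h1, h2⟩
          · exact Or.inr ⟨h2, h1⟩
          · exact Or.inl ⟨h2, h1⟩
      loopless := by
        constructor
        intro v h
        rcases h with h | ⟨hne, _⟩
        · exact H.G.irrefl h
        · exact hne rfl }
  lab := H.lab

/-- Multi-relabel `ρ_{i→S}`: in every label set containing `i`, replace `i` by the set `S`. -/
def relabel (i : Fin k) (S : Set (Fin k)) (H : MGraph k) : MGraph k where
  V := H.V
  G := H.G
  lab := fun v => {j | (j ∈ H.lab v ∧ j ≠ i) ∨ (i ∈ H.lab v ∧ j ∈ S)}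

/-- Disjoint union of multi-`k`-labeled graphs. -/
def union (H1 H2 : MGraph k) : MGraph k where
  V := H1.V ⊕ H2.V
  G := H1.G ⊕g H2.G
  lab := Sum.elim H1.lab H2.lab

/-- The single-vertex multi-`k`-labeled graph with label set `S`. -/
def singleVertex (S : Set (Fin k)) : MGraph k := ⟨PUnit, ⊥, fun _ => S⟩

end MGraph

/-- A multi-`k`-expression. -/
inductive MultiExpr (k : ℕ) where
  | intro (S : Set (Fin k))
  | union (φ1 φ2 : MultiExpr k)
  | join (i j : Fin k) (φ : MultiExpr k)
  | relabel (i : Fin k) (S : Set (Fin k)) (φ : MultiExpr k)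

namespace MultiExpr

variable {k : ℕ}

/-- The multi-`k`-labeled graph obtained by evaluating a multi-`k`-expression. -/
def eval : MultiExpr k → MGraph k
  | .intro S => MGraph.singleVertex S
  | .union φ1 φ2 => MGraph.union φ1.eval φ2.eval
  | .join i j φ => MGraph.join i j φ.eval
  | .relabel i S φ => MGraph.relabel i S φ.eval

/-- Well-formedness of a multi-`k`-expression: every join `η_{i,j}` has `i ≠ j` and is
applied to a graph in which no vertex's label set contains both `i` and `j`. -/
def WF : MultiExpr k → Prop
  | .intro _ => True
  | .union φ1 φ2 => φ1.WF ∧ φ2.WF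
  | .join i j φ => i ≠ j ∧ (∀ v, ¬ (i ∈ φ.eval.lab v ∧ j ∈ φ.eval.lab v)) ∧ φ.WF
  | .relabel _ _ φ => φ.WF

end MultiExpr

/-- A graph `G` admits a multi-`k`-expression if some well-formed multi-`k`-expression
evaluates to a multi-labeled graph whose underlying simple graph is isomorphic to `G`. -/
def MultiAdmits {V : Type} (k : ℕ) (G : SimpleGraph V) : Prop :=
  ∃ φ : MultiExpr k, φ.WF ∧ Nonempty (φ.eval.G ≃g G)

/-- The fusion-width of `G`: the least `k` such that `G` admits a fuse-`k`-expression. -/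
noncomputable def fw {V : Type} [Fintype V] (G : SimpleGraph V) : ℕ :=
  sInf {k | FuseAdmits k G}

/-- The multi-clique-width of `G`: the least `k` such that `G` admits a
multi-`k`-expression. -/
noncomputable def mcw {V : Type} [Fintype V] (G : SimpleGraph V) : ℕ :=
  sInf {k | MultiAdmits k G}

namespace FWProof

variable {k : ℕ}

/-- The simulation invariant relating a fuse-world `k`-labeled graph `H` (with a
"ghost" valuation `γ` on labels) to a multi-`(k+1)`-labeled graph `M`. -/
def Sim (H : LGraph k) (γ : Fin k → Bool) (M : MGraph (k + 1)) : Prop :=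
  ∃ β : {v : H.V // γ (H.lab v) = true} ≃ M.V,
    (∀ u v : {v : H.V // γ (H.lab v) = true}, M.G.Adj (β u) (β v) ↔ H.G.Adj u.1 v.1) ∧
    (∀ (v : {v : H.V // γ (H.lab v) = true}) (c : Fin k),
      c.castSucc ∈ M.lab (β v) ↔
        ((γ c = true ∧ H.lab v.1 = c) ∨
          (γ c = false ∧ ∃ w, H.lab w = c ∧ H.G.Adj v.1 w))) ∧
    (∀ v, Fin.last k ∉ M.lab (β v))

/-- The statement proved by induction over fuse-expressions. -/
def Good (φ : FuseExpr k) (γ : Fin k → Bool) : Prop :=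
  (∀ v : φ.eval.V, γ (φ.eval.lab v) = false) ∨
    ∃ ψ : MultiExpr (k + 1), ψ.WF ∧ Sim φ.eval γ ψ.eval

lemma last_ne_castSucc (c : Fin k) : Fin.last k ≠ c.castSucc := (Fin.castSucc_lt_last c).ne'

lemma good_intro (i : Fin k) (γ : Fin k → Bool) : Good (FuseExpr.intro i) γ := by
  cases h : γ i with
  | false => exact Or.inl fun v => h
  | true =>
    right
    refine ⟨MultiExpr.intro {(i.castSucc : Fin (k + 1))}, trivial, ?_⟩
    refine ⟨Equiv.subtypeUnivEquiv fun v => h, ?_, ?_, ?_⟩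
    · intro u v
      simp [FuseExpr.eval, FuseExpr.singleVertex, MultiExpr.eval, MGraph.singleVertex]
    · intro v c
      show c.castSucc ∈ ({i.castSucc} : Set (Fin (k + 1))) ↔ _
      simp only [Set.mem_singleton_iff, Fin.castSucc_inj]
      constructor
      · rintro rfl; exact Or.inl ⟨h, rfl⟩
      · rintro (⟨-, rfl⟩ | ⟨-, w, -, hadj⟩)
        · rfl
        · exact (show False from hadj).elim
    · intro v
      show Fin.last k ∉ ({i.castSucc} : Set (Fin (k + 1)))
      simp [last_ne_castSucc i]

section UnionCase

variable {k : ℕ}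

@[simp] lemma subtypeSum_inl {α β} {p : α ⊕ β → Prop} (a : α) (h : p (Sum.inl a)) :
    (Equiv.subtypeSum (⟨Sum.inl a, h⟩ : {c // p c})) = Sum.inl ⟨a, h⟩ := rfl

@[simp] lemma subtypeSum_inr {α β} {p : α ⊕ β → Prop} (b : β) (h : p (Sum.inr b)) :
    (Equiv.subtypeSum (⟨Sum.inr b, h⟩ : {c // p c})) = Sum.inr ⟨b, h⟩ := rfl

lemma sim_union_both {H1 H2 : LGraph k} {γ : Fin k → Bool} {M1 M2 : MGraph (k + 1)}
    (s1 : Sim H1 γ M1) (s2 : Sim H2 γ M2) :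
    Sim (H1.union H2) γ (M1.union M2) := by
  obtain ⟨β1, a1, l1, e1⟩ := s1
  obtain ⟨β2, a2, l2, e2⟩ := s2
  refine ⟨Equiv.subtypeSum.trans (Equiv.sumCongr β1 β2), ?_, ?_, ?_⟩
  · rintro ⟨u | u, hu⟩ ⟨v | v, hv⟩
    · exact a1 ⟨u, hu⟩ ⟨v, hv⟩
    · exact Iff.rfl
    · exact Iff.rfl
    · exact a2 ⟨u, hu⟩ ⟨v, hv⟩
  · rintro ⟨u | u, hu⟩ c <;>
      simp only [Equiv.trans_apply, subtypeSum_inl, subtypeSum_inr, Equiv.sumCongr_apply,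
        Sum.map_inl, Sum.map_inr]
    · show c.castSucc ∈ M1.lab (β1 ⟨u, hu⟩) ↔ _
      rw [l1 ⟨u, hu⟩ c]
      refine or_congr Iff.rfl (and_congr Iff.rfl ⟨?_, ?_⟩)
      · rintro ⟨w, hw, hadj⟩
        exact ⟨Sum.inl w, hw, hadj⟩
      · rintro ⟨(w | w), hw, hadj⟩
        · exact ⟨w, hw, hadj⟩
        · simp [LGraph.union, SimpleGraph.sum_adj] at hadj
    · show c.castSucc ∈ M2.lab (β2 ⟨u, hu⟩) ↔ _
      rw [l2 ⟨u, hu⟩ c]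
      refine or_congr Iff.rfl (and_congr Iff.rfl ⟨?_, ?_⟩)
      · rintro ⟨w, hw, hadj⟩
        exact ⟨Sum.inr w, hw, hadj⟩
      · rintro ⟨(w | w), hw, hadj⟩
        · simp [LGraph.union, SimpleGraph.sum_adj] at hadj
        · exact ⟨w, hw, hadj⟩
  · rintro ⟨u | u, hu⟩
    · exact e1 ⟨u, hu⟩
    · exact e2 ⟨u, hu⟩

def elimFT {α : Sort*} {b : Bool} (h1 : b = false) (h2 : b = true) : α :=
  absurd (h1 ▸ h2) Bool.noConfusion

lemma sim_union_right {H1 H2 : LGraph k} {γ : Fin k → Bool} {M2 : MGraph (k + 1)}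
    (h1 : ∀ v : H1.V, γ (H1.lab v) = false) (s2 : Sim H2 γ M2) :
    Sim (H1.union H2) γ M2 := by
  obtain ⟨β2, a2, l2, e2⟩ := s2
  refine ⟨⟨fun x => match x with
      | ⟨Sum.inl u, hu⟩ => elimFT (h1 u) hu
      | ⟨Sum.inr u, hu⟩ => β2 ⟨u, hu⟩,
    fun m => ⟨Sum.inr (β2.symm m).1, (β2.symm m).2⟩, ?_, ?_⟩, ?_, ?_, ?_⟩
  · rintro ⟨u | u, hu⟩
    · exact elimFT (h1 u) hu
    · simp
  · intro m
    simp
  · rintro ⟨u | u, hu⟩ ⟨v | v, hv⟩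
    · exact elimFT (h1 u) hu
    · exact elimFT (h1 u) hu
    · exact elimFT (h1 v) hv
    · show M2.G.Adj (β2 ⟨u, hu⟩) (β2 ⟨v, hv⟩) ↔ (H1.union H2).G.Adj (Sum.inr u) (Sum.inr v)
      rw [a2 ⟨u, hu⟩ ⟨v, hv⟩]
      simp [LGraph.union, SimpleGraph.sum_adj]
  · rintro ⟨u | u, hu⟩ c
    · exact elimFT (h1 u) hu
    · show c.castSucc ∈ M2.lab (β2 ⟨u, hu⟩) ↔ _
      rw [l2 ⟨u, hu⟩ c]
      refine or_congr Iff.rfl (and_congr Iff.rfl ⟨?_, ?_⟩)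
      · rintro ⟨w, hw, hadj⟩
        exact ⟨Sum.inr w, hw, hadj⟩
      · rintro ⟨(w | w), hw, hadj⟩
        · simp [LGraph.union, SimpleGraph.sum_adj] at hadj
        · exact ⟨w, hw, hadj⟩
  · rintro ⟨u | u, hu⟩
    · exact elimFT (h1 u) hu
    · exact e2 ⟨u, hu⟩

lemma sim_union_left {H1 H2 : LGraph k} {γ : Fin k → Bool} {M1 : MGraph (k + 1)}
    (s1 : Sim H1 γ M1) (h2 : ∀ v : H2.V, γ (H2.lab v) = false) :
    Sim (H1.union H2) γ M1 := by
  obtain ⟨β1, a1, l1, e1⟩ := s1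
  refine ⟨⟨fun x => match x with
      | ⟨Sum.inl u, hu⟩ => β1 ⟨u, hu⟩
      | ⟨Sum.inr u, hu⟩ => elimFT (h2 u) hu,
    fun m => ⟨Sum.inl (β1.symm m).1, (β1.symm m).2⟩, ?_, ?_⟩, ?_, ?_, ?_⟩
  · rintro ⟨u | u, hu⟩
    · simp
    · exact elimFT (h2 u) hu
  · intro m
    simp
  · rintro ⟨u | u, hu⟩ ⟨v | v, hv⟩
    · show M1.G.Adj (β1 ⟨u, hu⟩) (β1 ⟨v, hv⟩) ↔ (H1.union H2).G.Adj (Sum.inl u) (Sum.inl v)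
      rw [a1 ⟨u, hu⟩ ⟨v, hv⟩]
      simp [LGraph.union, SimpleGraph.sum_adj]
    · exact elimFT (h2 v) hv
    · exact elimFT (h2 u) hu
    · exact elimFT (h2 u) hu
  · rintro ⟨u | u, hu⟩ c
    · show c.castSucc ∈ M1.lab (β1 ⟨u, hu⟩) ↔ _
      rw [l1 ⟨u, hu⟩ c]
      refine or_congr Iff.rfl (and_congr Iff.rfl ⟨?_, ?_⟩)
      · rintro ⟨w, hw, hadj⟩
        exact ⟨Sum.inl w, hw, hadj⟩
      · rintro ⟨(w | w), hw, hadj⟩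
        · exact ⟨w, hw, hadj⟩
        · simp [LGraph.union, SimpleGraph.sum_adj] at hadj
    · exact elimFT (h2 u) hu
  · rintro ⟨u | u, hu⟩
    · exact e1 ⟨u, hu⟩
    · exact elimFT (h2 u) hu

lemma good_union {φ1 φ2 : FuseExpr k} {γ : Fin k → Bool}
    (g1 : Good φ1 γ) (g2 : Good φ2 γ) : Good (FuseExpr.union φ1 φ2) γ := by
  rcases g1 with g1 | ⟨ψ1, w1, s1⟩
  · rcases g2 with g2 | ⟨ψ2, w2, s2⟩
    · exact Or.inl fun v => by rcases v with v | v; exacts [g1 v, g2 v]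
    · exact Or.inr ⟨ψ2, w2, sim_union_right g1 s2⟩
  · rcases g2 with g2 | ⟨ψ2, w2, s2⟩
    · exact Or.inr ⟨ψ1, w1, sim_union_left s1 g2⟩
    · exact Or.inr ⟨MultiExpr.union ψ1 ψ2, ⟨w1, w2⟩, sim_union_both s1 s2⟩

end UnionCase
section RelabelCase

variable {k : ℕ}

/-- The ghost valuation for the subexpression of a relabel node. -/
def gswap (γ : Fin k → Bool) (a b : Fin k) : Fin k → Bool := fun c => if c = a then γ b else γ c

@[simp] lemma gswap_self (γ : Fin k → Bool) (a b : Fin k) : gswap γ a b a = γ b := by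
  simp [gswap]

lemma gswap_ne {γ : Fin k → Bool} {a b c : Fin k} (h : c ≠ a) :
    gswap γ a b c = γ c := by simp [gswap, h]

lemma relabel_lab (H : LGraph k) (a b : Fin k) (v : H.V) :
    (LGraph.relabel a b H).lab v = if H.lab v = a then b else H.lab v := rfl

lemma gswap_relabel {H : LGraph k} (γ : Fin k → Bool) (a b : Fin k) (v : H.V) :
    γ ((LGraph.relabel a b H).lab v) = gswap γ a b (H.lab v) := by
  rw [relabel_lab]
  by_cases h : H.lab v = a <;> simp [gswap, h]

lemma sim_relabel {H : LGraph k} {γ : Fin k → Bool} {M : MGraph (k + 1)} {a b : Fin k}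
    (hab : a ≠ b) (s : Sim H (gswap γ a b) M) :
    Sim (LGraph.relabel a b H) γ (MGraph.relabel a.castSucc {b.castSucc} M) := by
  obtain ⟨β1, a1, l1, e1⟩ := s
  have hsub : ∀ v : H.V, (γ ((LGraph.relabel a b H).lab v) = true) ↔
      (gswap γ a b (H.lab v) = true) := fun v => by
    rw [relabel_lab]
    by_cases h : H.lab v = a <;> simp [gswap, h]
  refine ⟨(Equiv.subtypeEquivRight hsub).trans β1, ?_, ?_, ?_⟩
  · rintro ⟨u, hu⟩ ⟨v, hv⟩
    exact a1 ⟨u, (hsub u).mp hu⟩ ⟨v, (hsub v).mp hv⟩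
  · rintro ⟨v, hv⟩ c
    have hv1 : gswap γ a b (H.lab v) = true := (hsub v).mp hv
    show c.castSucc ∈ (MGraph.relabel a.castSucc {b.castSucc} M).lab (β1 ⟨v, hv1⟩) ↔ _
    have lmem : ∀ d : Fin k, (d.castSucc ∈ (MGraph.relabel a.castSucc {b.castSucc} M).lab
        (β1 ⟨v, hv1⟩)) ↔
        ((d.castSucc ∈ M.lab (β1 ⟨v, hv1⟩) ∧ d ≠ a) ∨
          (a.castSucc ∈ M.lab (β1 ⟨v, hv1⟩) ∧ d = b)) := by
      intro d
      show ((d.castSucc ∈ M.lab _ ∧ d.castSucc ≠ a.castSucc) ∨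
        (a.castSucc ∈ M.lab _ ∧ d.castSucc ∈ ({b.castSucc} : Set (Fin (k + 1))))) ↔ _
      rw [Set.mem_singleton_iff]
      constructor
      · rintro (⟨h1, h2⟩ | ⟨h1, h2⟩)
        · exact Or.inl ⟨h1, fun hc => h2 (by rw [hc])⟩
        · exact Or.inr ⟨h1, Fin.castSucc_injective _ h2⟩
      · rintro (⟨h1, h2⟩ | ⟨h1, h2⟩)
        · exact Or.inl ⟨h1, fun hc => h2 (Fin.castSucc_injective _ hc)⟩
        · exact Or.inr ⟨h1, by rw [h2]⟩
    rw [lmem c]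
    rcases eq_or_ne c a with hca | hca
    · -- c = a : both sides are false
      constructor
      · rintro (⟨-, hne⟩ | ⟨-, heq⟩)
        · exact absurd hca hne
        · exact absurd (hca ▸ heq : a = b) hab
      · rintro (⟨-, heq⟩ | ⟨-, w, hw, -⟩)
        · change (if H.lab v = a then b else H.lab v) = c at heq
          by_cases h : H.lab v = a
          · rw [if_pos h] at heq; exact absurd (hca ▸ heq.symm : a = b) hab
          · rw [if_neg h] at heq; exact absurd (hca ▸ heq) h
        · change (if H.lab w = a then b else H.lab w) = c at hw
          by_cases h : H.lab w = a
          · rw [if_pos h] at hw; exact absurd (hca ▸ hw.symm : a = b) hab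
          · rw [if_neg h] at hw; exact absurd (hca ▸ hw) h
    · rcases eq_or_ne c b with hcb | hcb
      · -- c = b
        subst hcb
        rw [l1 ⟨v, hv1⟩ c, l1 ⟨v, hv1⟩ a, gswap_self, gswap_ne hca]
        have hite : ∀ w : H.V, ((LGraph.relabel a c H).lab w = c) ↔
            (H.lab w = a ∨ H.lab w = c) := by
          intro w
          rw [relabel_lab]
          by_cases h : H.lab w = a
          · simp [h]
          · simp [h]
        cases hgb : γ c with
        | true =>
          constructor
          · rintro (⟨⟨-, h⟩ | ⟨h, -⟩, -⟩ | ⟨⟨-, h⟩ | ⟨h, -⟩, -⟩)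
            · exact Or.inl ⟨rfl, (hite v).mpr (Or.inr h)⟩
            · exact Bool.noConfusion h
            · exact Or.inl ⟨rfl, (hite v).mpr (Or.inl h)⟩
            · exact Bool.noConfusion h
          · rintro (⟨-, h⟩ | ⟨h, -⟩)
            · rcases (hite v).mp h with h' | h'
              · exact Or.inr ⟨Or.inl ⟨rfl, h'⟩, rfl⟩
              · exact Or.inl ⟨Or.inl ⟨rfl, h'⟩, hca⟩
            · exact Bool.noConfusion h
        | false =>
          constructor
          · rintro (⟨⟨h, -⟩ | ⟨-, w, hw, hadj⟩, -⟩ | ⟨⟨h, -⟩ | ⟨-, w, hw, hadj⟩, -⟩)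
            · exact Bool.noConfusion h
            · exact Or.inr ⟨rfl, w, (hite w).mpr (Or.inr hw), hadj⟩
            · exact Bool.noConfusion h
            · exact Or.inr ⟨rfl, w, (hite w).mpr (Or.inl hw), hadj⟩
          · rintro (⟨h, -⟩ | ⟨-, w, hw, hadj⟩)
            · exact Bool.noConfusion h
            · rcases (hite w).mp hw with h' | h'
              · exact Or.inr ⟨Or.inr ⟨rfl, w, h', hadj⟩, rfl⟩
              · exact Or.inl ⟨Or.inr ⟨rfl, w, h', hadj⟩, hca⟩
      · -- c ∉ {a, b}
        rw [l1 ⟨v, hv1⟩ c, gswap_ne hca]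
        have hite : ∀ w : H.V, ((LGraph.relabel a b H).lab w = c) ↔ (H.lab w = c) := by
          intro w
          rw [relabel_lab]
          by_cases h : H.lab w = a
          · rw [if_pos h]
            constructor
            · intro h'; exact absurd h'.symm hcb
            · intro h'; exact absurd (h.symm.trans h') (Ne.symm hca)
          · rw [if_neg h]
        constructor
        · rintro (⟨h, -⟩ | ⟨-, h⟩)
          · rcases h with ⟨h1, h2⟩ | ⟨h1, w, hw, hadj⟩
            · exact Or.inl ⟨h1, (hite v).mpr h2⟩
            · exact Or.inr ⟨h1, w, (hite w).mpr hw, hadj⟩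
          · exact absurd h hcb
        · rintro (⟨h1, h2⟩ | ⟨h1, w, hw, hadj⟩)
          · exact Or.inl ⟨Or.inl ⟨h1, (hite v).mp h2⟩, hca⟩
          · exact Or.inl ⟨Or.inr ⟨h1, w, (hite w).mp hw, hadj⟩, hca⟩
  · rintro ⟨v, hv⟩
    have hv1 : gswap γ a b (H.lab v) = true := (hsub v).mp hv
    show Fin.last k ∉ (MGraph.relabel a.castSucc {b.castSucc} M).lab (β1 ⟨v, hv1⟩)
    rintro (⟨h1, -⟩ | ⟨-, h2⟩)
    · exact e1 ⟨v, hv1⟩ h1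
    · exact last_ne_castSucc b h2

lemma good_relabel {φ : FuseExpr k} {γ : Fin k → Bool} {a b : Fin k} (hab : a ≠ b)
    (g : Good φ (gswap γ a b)) :
    Good (FuseExpr.relabel a b φ) γ := by
  rcases g with g | ⟨ψ, wψ, s⟩
  · left
    intro v
    have hg := g v
    show γ ((LGraph.relabel a b φ.eval).lab v) = false
    change γ (if φ.eval.lab v = a then b else φ.eval.lab v) = false
    by_cases h : φ.eval.lab v = a
    · rw [if_pos h]
      simp only [gswap, h, if_pos rfl] at hg
      exact hg
    · rw [if_neg h]
      rwa [gswap_ne h] at hg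
  · exact Or.inr ⟨MultiExpr.relabel a.castSucc {b.castSucc} ψ, wψ, sim_relabel hab s⟩

end RelabelCase
section JoinCase

variable {k : ℕ}

lemma join_adj (H : LGraph k) (i j : Fin k) (u v : H.V) :
    (LGraph.join i j H).G.Adj u v ↔
      (H.G.Adj u v ∨ (u ≠ v ∧ ((H.lab u = i ∧ H.lab v = j) ∨ (H.lab u = j ∧ H.lab v = i)))) :=
  Iff.rfl

lemma mjoin_adj (M : MGraph (k + 1)) (i j : Fin (k + 1)) (u v : M.V) :
    (MGraph.join i j M).G.Adj u v ↔
      (M.G.Adj u v ∨ (u ≠ v ∧ ((i ∈ M.lab u ∧ j ∈ M.lab v) ∨ (j ∈ M.lab u ∧ i ∈ M.lab v)))) :=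
  Iff.rfl

/-- If a join does not affect edges at real vertices, the simulation is unchanged. -/
lemma sim_join_of_adj_iff {H : LGraph k} {γ : Fin k → Bool} {M : MGraph (k + 1)} {i j : Fin k}
    (hiff : ∀ u v : H.V, γ (H.lab u) = true →
      ((LGraph.join i j H).G.Adj u v ↔ H.G.Adj u v))
    (s : Sim H γ M) : Sim (LGraph.join i j H) γ M := by
  obtain ⟨β1, a1, l1, e1⟩ := s
  refine ⟨β1, ?_, ?_, e1⟩
  · intro u v
    exact (a1 u v).trans (hiff u.1 v.1 u.2).symm
  · intro v c
    refine (l1 v c).trans (or_congr Iff.rfl (and_congr Iff.rfl ⟨?_, ?_⟩))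
    · rintro ⟨w, hw, hadj⟩
      exact ⟨w, hw, (hiff v.1 w v.2).mpr hadj⟩
    · rintro ⟨w, hw, hadj⟩
      exact ⟨w, hw, (hiff v.1 w v.2).mp hadj⟩

/-- Transfer a simulation along the symmetry of the join operation. -/
lemma sim_join_swap {H : LGraph k} {γ : Fin k → Bool} {M : MGraph (k + 1)} {i j : Fin k}
    (s : Sim (LGraph.join j i H) γ M) : Sim (LGraph.join i j H) γ M := by
  obtain ⟨β1, a1, l1, e1⟩ := s
  have hsw : ∀ u v : H.V, (LGraph.join i j H).G.Adj u v ↔ (LGraph.join j i H).G.Adj u v := by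
    intro u v
    rw [join_adj, join_adj]
    tauto
  refine ⟨β1, ?_, ?_, e1⟩
  · intro u v
    exact (a1 u v).trans (hsw u.1 v.1).symm
  · intro v c
    refine (l1 v c).trans (or_congr Iff.rfl (and_congr Iff.rfl ⟨?_, ?_⟩))
    · rintro ⟨w, hw, hadj⟩
      exact ⟨w, hw, (hsw v.1 w).mpr hadj⟩
    · rintro ⟨w, hw, hadj⟩
      exact ⟨w, hw, (hsw v.1 w).mp hadj⟩

/-- Join with both labels real: perform the corresponding multi-join. It is legal. -/
lemma sim_join_RR {H : LGraph k} {γ : Fin k → Bool} {M : MGraph (k + 1)} {i j : Fin k}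
    (hij : i ≠ j) (hi : γ i = true) (hj : γ j = true) (s : Sim H γ M) :
    Sim (LGraph.join i j H) γ (MGraph.join i.castSucc j.castSucc M) ∧
      (∀ x : M.V, ¬(i.castSucc ∈ M.lab x ∧ j.castSucc ∈ M.lab x)) := by
  obtain ⟨β1, a1, l1, e1⟩ := s
  have hmem : ∀ (v : {v : H.V // γ (H.lab v) = true}) (c : Fin k), γ c = true →
      (c.castSucc ∈ M.lab (β1 v) ↔ H.lab v.1 = c) := by
    intro v c hc
    rw [l1 v c]
    constructor
    · rintro (⟨-, h⟩ | ⟨hf, -⟩)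
      · exact h
      · exact elimFT hf hc
    · intro h
      exact Or.inl ⟨hc, h⟩
  have hleg : ∀ x : M.V, ¬(i.castSucc ∈ M.lab x ∧ j.castSucc ∈ M.lab x) := by
    intro x ⟨hix, hjx⟩
    have hx : x = β1 (β1.symm x) := (β1.apply_symm_apply x).symm
    rw [hx] at hix hjx
    rw [hmem _ i hi] at hix
    rw [hmem _ j hj] at hjx
    exact hij (hix ▸ hjx)
  refine ⟨⟨β1, ?_, ?_, e1⟩, hleg⟩
  · intro u v
    have hne : (β1 u ≠ β1 v) ↔ (u.1 ≠ v.1) :=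
      not_congr ((Equiv.apply_eq_iff_eq β1).trans Subtype.ext_iff)
    exact (mjoin_adj M i.castSucc j.castSucc (β1 u) (β1 v)).trans
      ((or_congr (a1 u v) (and_congr hne
        (or_congr (and_congr (hmem u i hi) (hmem v j hj))
          (and_congr (hmem u j hj) (hmem v i hi))))).trans
        (join_adj H i j u.1 v.1).symm)
  · intro v c
    refine (l1 v c).trans (or_congr Iff.rfl (and_congr_right fun hc => ⟨?_, ?_⟩))
    · rintro ⟨w, hw, hadj⟩
      exact ⟨w, hw, (join_adj H i j v.1 w).mpr (Or.inl hadj)⟩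
    · rintro ⟨w, hw, hadj⟩
      refine ⟨w, hw, ?_⟩
      rcases (join_adj H i j v.1 w).mp hadj with h | ⟨-, ⟨-, hwj⟩ | ⟨-, hwi⟩⟩
      · exact h
      · exact elimFT ((hw.symm.trans hwj) ▸ hc) hj
      · exact elimFT ((hw.symm.trans hwi) ▸ hc) hi

/-- Join with `i` real and `j` ghost, with at least one `j`-vertex present:
mark the `i`-labeled real vertices with the ghost label `j`. -/
lemma sim_join_RA {H : LGraph k} {γ : Fin k → Bool} {M : MGraph (k + 1)} {i j : Fin k}
    (hij : i ≠ j) (hi : γ i = true) (hj : γ j = false) (hex : ∃ w : H.V, H.lab w = j)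
    (s : Sim H γ M) :
    Sim (LGraph.join i j H) γ
      (MGraph.relabel i.castSucc {i.castSucc, j.castSucc} M) := by
  obtain ⟨β1, a1, l1, e1⟩ := s
  have hmem : ∀ (v : {v : H.V // γ (H.lab v) = true}) (c : Fin k), γ c = true →
      (c.castSucc ∈ M.lab (β1 v) ↔ H.lab v.1 = c) := by
    intro v c hc
    rw [l1 v c]
    constructor
    · rintro (⟨-, h⟩ | ⟨hf, -⟩)
      · exact h
      · exact elimFT hf hc
    · intro h
      exact Or.inl ⟨hc, h⟩
  refine ⟨β1, ?_, ?_, ?_⟩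
  · intro u v
    refine (a1 u v).trans ⟨Or.inl, ?_⟩
    rintro (h | ⟨-, ⟨-, hvj⟩ | ⟨huj, -⟩⟩)
    · exact h
    · exact elimFT hj (hvj ▸ v.2)
    · exact elimFT hj (huj ▸ u.2)
  · intro v c
    have lmem : (c.castSucc ∈ (MGraph.relabel i.castSucc {i.castSucc, j.castSucc} M).lab
        (β1 v)) ↔
        ((c.castSucc ∈ M.lab (β1 v) ∧ c ≠ i) ∨
          (i.castSucc ∈ M.lab (β1 v) ∧ (c = i ∨ c = j))) := by
      show ((c.castSucc ∈ M.lab _ ∧ c.castSucc ≠ i.castSucc) ∨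
        (i.castSucc ∈ M.lab _ ∧ c.castSucc ∈ ({i.castSucc, j.castSucc} : Set (Fin (k + 1))))) ↔ _
      rw [Set.mem_insert_iff, Set.mem_singleton_iff]
      constructor
      · rintro (⟨h1, h2⟩ | ⟨h1, h2 | h2⟩)
        · exact Or.inl ⟨h1, fun hc => h2 (by rw [hc])⟩
        · exact Or.inr ⟨h1, Or.inl (Fin.castSucc_injective _ h2)⟩
        · exact Or.inr ⟨h1, Or.inr (Fin.castSucc_injective _ h2)⟩
      · rintro (⟨h1, h2⟩ | ⟨h1, h2 | h2⟩)
        · exact Or.inl ⟨h1, fun hc => h2 (Fin.castSucc_injective _ hc)⟩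
        · exact Or.inr ⟨h1, Or.inl (by rw [h2])⟩
        · exact Or.inr ⟨h1, Or.inr (by rw [h2])⟩
    refine lmem.trans ?_
    rcases eq_or_ne c i with rfl | hci
    · -- c = i
      constructor
      · rintro (⟨-, hne⟩ | ⟨h, -⟩)
        · exact absurd rfl hne
        · exact Or.inl ⟨hi, (hmem v c hi).mp h⟩
      · rintro (⟨-, h⟩ | ⟨hf, -⟩)
        · exact Or.inr ⟨(hmem v c hi).mpr h, Or.inl rfl⟩
        · exact elimFT hf hi
    · rcases eq_or_ne c j with rfl | hcj
      · -- c = j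
        obtain ⟨w0, hw0⟩ := hex
        constructor
        · rintro (⟨h, -⟩ | ⟨h, -⟩)
          · rcases (l1 v c).mp h with ⟨ht, -⟩ | ⟨-, w, hw, hadj⟩
            · exact elimFT hj ht
            · exact Or.inr ⟨hj, w, hw, (join_adj H i c v.1 w).mpr (Or.inl hadj)⟩
          · have hvi : H.lab v.1 = i := (hmem v i hi).mp h
            refine Or.inr ⟨hj, w0, hw0, (join_adj H i c v.1 w0).mpr
              (Or.inr ⟨?_, Or.inl ⟨hvi, hw0⟩⟩)⟩
            intro hvw
            rw [← hvw, hvi] at hw0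
            exact hij hw0
        · rintro (⟨hf, -⟩ | ⟨-, w, hw, hadj⟩)
          · exact elimFT hj hf
          · rcases (join_adj H i c v.1 w).mp hadj with h | ⟨-, ⟨hvi, -⟩ | ⟨hvj, -⟩⟩
            · exact Or.inl ⟨(l1 v c).mpr (Or.inr ⟨hj, w, hw, h⟩), hij.symm⟩
            · exact Or.inr ⟨(hmem v i hi).mpr hvi, Or.inr rfl⟩
            · exact elimFT hj (hvj ▸ v.2)
      · -- c ∉ {i, j}
        constructor
        · rintro (⟨h, -⟩ | ⟨-, h | h⟩)
          · rcases (l1 v c).mp h with ⟨h1, h2⟩ | ⟨h1, w, hw, hadj⟩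
            · exact Or.inl ⟨h1, h2⟩
            · exact Or.inr ⟨h1, w, hw, (join_adj H i j v.1 w).mpr (Or.inl hadj)⟩
          · exact absurd h hci
          · exact absurd h hcj
        · rintro (⟨h1, h2⟩ | ⟨h1, w, hw, hadj⟩)
          · exact Or.inl ⟨(l1 v c).mpr (Or.inl ⟨h1, h2⟩), hci⟩
          · rcases (join_adj H i j v.1 w).mp hadj with h | ⟨-, ⟨-, hwj⟩ | ⟨-, hwi⟩⟩
            · exact Or.inl ⟨(l1 v c).mpr (Or.inr ⟨h1, w, hw, h⟩), hci⟩
            · exact absurd (hw.symm.trans hwj) hcj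
            · exact absurd (hw.symm.trans hwi) hci
  · intro v
    rintro (⟨h1, -⟩ | ⟨-, h2⟩)
    · exact e1 v h1
    · rcases h2 with h2 | h2
      · exact last_ne_castSucc i h2
      · exact last_ne_castSucc j h2

lemma good_join {φ : FuseExpr k} {γ : Fin k → Bool} {i j : Fin k} (hij : i ≠ j)
    (g : Good φ γ) : Good (FuseExpr.join i j φ) γ := by
  rcases g with g | ⟨ψ, wψ, s⟩
  · exact Or.inl fun v => g v
  · cases hgi : γ i with
    | true =>
      cases hgj : γ j with
      | true =>
        obtain ⟨s', leg⟩ := sim_join_RR hij hgi hgj s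
        exact Or.inr ⟨MultiExpr.join i.castSucc j.castSucc ψ,
          ⟨fun h => hij (Fin.castSucc_injective _ h), fun v hv => leg v hv, wψ⟩, s'⟩
      | false =>
        by_cases hex : ∃ w : φ.eval.V, φ.eval.lab w = j
        · exact Or.inr ⟨MultiExpr.relabel i.castSucc {i.castSucc, j.castSucc} ψ, wψ,
            sim_join_RA hij hgi hgj hex s⟩
        · refine Or.inr ⟨ψ, wψ, sim_join_of_adj_iff ?_ s⟩
          intro u v hu
          refine ⟨?_, Or.inl⟩
          rintro (h | ⟨-, ⟨-, hvj⟩ | ⟨huj, -⟩⟩)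
          · exact h
          · exact absurd ⟨v, hvj⟩ hex
          · exact absurd ⟨u, huj⟩ hex
    | false =>
      cases hgj : γ j with
      | true =>
        by_cases hex : ∃ w : φ.eval.V, φ.eval.lab w = i
        · exact Or.inr ⟨MultiExpr.relabel j.castSucc {j.castSucc, i.castSucc} ψ, wψ,
            sim_join_swap (sim_join_RA hij.symm hgj hgi hex s)⟩
        · refine Or.inr ⟨ψ, wψ, sim_join_of_adj_iff ?_ s⟩
          intro u v hu
          refine ⟨?_, Or.inl⟩
          rintro (h | ⟨-, ⟨hui, -⟩ | ⟨-, hvi⟩⟩)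
          · exact h
          · exact absurd ⟨u, hui⟩ hex
          · exact absurd ⟨v, hvi⟩ hex
      | false =>
        refine Or.inr ⟨ψ, wψ, sim_join_of_adj_iff ?_ s⟩
        intro u v hu
        refine ⟨?_, Or.inl⟩
        rintro (h | ⟨-, ⟨hui, -⟩ | ⟨huj, -⟩⟩)
        · exact h
        · exact elimFT hgi (hui ▸ hu)
        · exact elimFT hgj (huj ▸ hu)

end JoinCase

section FuseCase

variable {k : ℕ}

lemma fuse_adj_ss (H : LGraph k) (i : Fin k) (u v : {v : H.V // H.lab v ≠ i}) :
    (LGraph.fuse i H).G.Adj (some u) (some v) ↔ H.G.Adj u.1 v.1 := Iff.rfl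

lemma fuse_adj_sn (H : LGraph k) (i : Fin k) (u : {v : H.V // H.lab v ≠ i}) :
    (LGraph.fuse i H).G.Adj (some u) none ↔ ∃ w, H.lab w = i ∧ H.G.Adj u.1 w := Iff.rfl

lemma fuse_adj_ns (H : LGraph k) (i : Fin k) (v : {v : H.V // H.lab v ≠ i}) :
    (LGraph.fuse i H).G.Adj none (some v) ↔ ∃ w, H.lab w = i ∧ H.G.Adj w v.1 := Iff.rfl

lemma fuse_adj_nn (H : LGraph k) (i : Fin k) :
    (LGraph.fuse i H).G.Adj none none ↔ False := Iff.rfl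

/-- The ghost valuation for the subexpression of an outermost fuse node. -/
def gfuse (γ : Fin k → Bool) (i : Fin k) : Fin k → Bool := fun c => if c = i then false else γ c

@[simp] lemma gfuse_self (γ : Fin k → Bool) (i : Fin k) : gfuse γ i i = false := by
  simp [gfuse]

lemma gfuse_ne {γ : Fin k → Bool} {i c : Fin k} (h : c ≠ i) : gfuse γ i c = γ c := by
  simp [gfuse, h]

/-- Fusing a ghost label changes nothing in the simulation. -/
lemma good_fuse_ghost {φ : FuseExpr k} {γ : Fin k → Bool} {i : Fin k} (hgi : γ i = false)
    (g : Good φ γ) : Good (FuseExpr.fuse i φ) γ := by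
  rcases g with g | ⟨ψ, wψ, s⟩
  · left
    rintro (_ | u)
    · exact hgi
    · exact g u.1
  · right
    obtain ⟨β1, a1, l1, e1⟩ := s
    refine ⟨ψ, wψ, Equiv.trans ⟨fun x => match x with
      | ⟨some u, h⟩ => (⟨u.1, h⟩ : {v : φ.eval.V // γ (φ.eval.lab v) = true})
      | ⟨none, h⟩ => elimFT hgi h,
      fun v => ⟨some ⟨v.1, fun hlab => elimFT hgi (hlab ▸ v.2)⟩, v.2⟩, ?_, ?_⟩ β1, ?_, ?_, ?_⟩
    · rintro ⟨(_ | u), h⟩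
      · exact elimFT hgi h
      · rfl
    · intro v
      rfl
    · rintro ⟨(_ | u), hu⟩ ⟨(_ | v), hv⟩
      · exact elimFT hgi hu
      · exact elimFT hgi hu
      · exact elimFT hgi hv
      · exact a1 ⟨u.1, hu⟩ ⟨v.1, hv⟩
    · rintro ⟨(_ | u), hu⟩ c
      · exact elimFT hgi hu
      · refine (l1 ⟨u.1, hu⟩ c).trans
          (or_congr Iff.rfl (and_congr_right fun hc => ⟨?_, ?_⟩))
        · rintro ⟨w, hw, hadj⟩
          by_cases hwi : φ.eval.lab w = i
          · exact ⟨none, hwi.symm.trans hw, ⟨w, hwi, hadj⟩⟩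
          · exact ⟨some ⟨w, hwi⟩, hw, hadj⟩
        · rintro ⟨(_ | w), hw, hadj⟩
          · obtain ⟨w', hw', hadj'⟩ := hadj
            exact ⟨w', hw'.trans hw, hadj'⟩
          · exact ⟨w.1, hw, hadj⟩
    · rintro ⟨(_ | u), hu⟩
      · exact elimFT hgi hu
      · exact e1 ⟨u.1, hu⟩

end FuseCase

section FuseAux

variable {k : ℕ}

/-- The multi-graph built at an outermost fuse. -/
def fuseM (M1 : MGraph (k + 1)) (i : Fin k) (S : Set (Fin (k + 1))) : MGraph (k + 1) :=
  MGraph.relabel (Fin.last k) S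
    (MGraph.relabel i.castSucc ∅
      (MGraph.join (Fin.last k) i.castSucc
        (MGraph.union M1 (MGraph.singleVertex {Fin.last k}))))

lemma fuseM_lab2 (M1 : MGraph (k + 1)) (i : Fin k) (x : M1.V ⊕ PUnit) (d : Fin (k + 1)) :
    (d ∈ (MGraph.relabel i.castSucc ∅
      (MGraph.join (Fin.last k) i.castSucc
        (MGraph.union M1 (MGraph.singleVertex {Fin.last k})))).lab x) ↔
    (d ∈ (MGraph.union M1 (MGraph.singleVertex {Fin.last k})).lab x ∧ d ≠ i.castSucc) := by
  constructor
  · rintro (⟨h1, h2⟩ | ⟨-, h⟩)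
    · exact ⟨h1, h2⟩
    · exact absurd h (Set.notMem_empty d)
  · exact Or.inl

lemma fuseM_lab_inl (M1 : MGraph (k + 1)) (i : Fin k) (S : Set (Fin (k + 1)))
    (hσ : ∀ m : M1.V, Fin.last k ∉ M1.lab m) (m : M1.V) (c : Fin k) :
    (c.castSucc ∈ (fuseM M1 i S).lab (Sum.inl m)) ↔ (c.castSucc ∈ M1.lab m ∧ c ≠ i) := by
  constructor
  · rintro (⟨h1, h2⟩ | ⟨h1, -⟩)
    · obtain ⟨h1, h3⟩ := (fuseM_lab2 M1 i _ _).mp h1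
      exact ⟨h1, fun hc => h3 (by rw [hc])⟩
    · obtain ⟨h1, -⟩ := (fuseM_lab2 M1 i _ _).mp h1
      exact absurd h1 (hσ m)
  · rintro ⟨h1, h2⟩
    exact Or.inl ⟨(fuseM_lab2 M1 i _ _).mpr
      ⟨h1, fun hc => h2 (Fin.castSucc_injective _ hc)⟩, (last_ne_castSucc c).symm⟩

lemma fuseM_lab_inr (M1 : MGraph (k + 1)) (i : Fin k) (S : Set (Fin (k + 1)))
    (u : PUnit) (d : Fin (k + 1)) :
    (d ∈ (fuseM M1 i S).lab (Sum.inr u)) ↔ d ∈ S := by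
  constructor
  · rintro (⟨h1, h2⟩ | ⟨-, h⟩)
    · obtain ⟨h1, -⟩ := (fuseM_lab2 M1 i _ _).mp h1
      exact absurd h1 h2
    · exact h
  · intro h
    refine Or.inr ⟨(fuseM_lab2 M1 i _ _).mpr ⟨rfl, last_ne_castSucc i⟩, h⟩

lemma fuseM_lab_last (M1 : MGraph (k + 1)) (i : Fin k) (S : Set (Fin (k + 1)))
    (hσ : ∀ m : M1.V, Fin.last k ∉ M1.lab m) (hS : Fin.last k ∉ S) (x : M1.V ⊕ PUnit) :
    Fin.last k ∉ (fuseM M1 i S).lab x := by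
  rintro (⟨-, h2⟩ | ⟨-, h⟩)
  · exact h2 rfl
  · exact hS h

end FuseAux

section FuseRealCase

variable {k : ℕ}

/-- The set of (ghost) labels of pending virtual partner classes of the class fused by an
outermost fuse, plus marks of real partners are at label `i` itself. -/
def pendT (φ : FuseExpr k) (γ : Fin k → Bool) (i : Fin k) : Set (Fin (k + 1)) :=
  {d | ∃ c : Fin k, d = c.castSucc ∧ γ c = false ∧
    ∃ u w : φ.eval.V, φ.eval.lab u = i ∧ φ.eval.lab w = c ∧ φ.eval.G.Adj u w}

lemma mem_pendT {φ : FuseExpr k} {γ : Fin k → Bool} {i : Fin k} {c : Fin k} :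
    c.castSucc ∈ pendT φ γ i ↔ (γ c = false ∧
      ∃ u w : φ.eval.V, φ.eval.lab u = i ∧ φ.eval.lab w = c ∧ φ.eval.G.Adj u w) := by
  constructor
  · rintro ⟨c0, hc0, h⟩
    rwa [show c0 = c from (Fin.castSucc_injective _ hc0.symm)] at h
  · intro h
    exact ⟨c, rfl, h⟩

lemma last_not_mem_pendT {φ : FuseExpr k} {γ : Fin k → Bool} {i : Fin k} :
    Fin.last k ∉ pendT φ γ i := by
  rintro ⟨c0, hc0, -⟩
  exact last_ne_castSucc c0 hc0

/-- The label-set specification of the new representative vertex created at an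
outermost fuse. -/
lemma pendT_spec {φ : FuseExpr k} {γ : Fin k → Bool} {i : Fin k} (hgi : γ i = true)
    (c : Fin k) :
    (c.castSucc ∈ insert i.castSucc (pendT φ γ i)) ↔
      ((γ c = true ∧ (FuseExpr.fuse i φ).eval.lab none = c) ∨
        (γ c = false ∧ ∃ x, (FuseExpr.fuse i φ).eval.lab x = c ∧
          (FuseExpr.fuse i φ).eval.G.Adj none x)) := by
  rw [Set.mem_insert_iff, mem_pendT]
  constructor
  · rintro (h | ⟨hc, u, w, hu, hw, hadj⟩)
    · have hci : c = i := Fin.castSucc_injective _ h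
      exact Or.inl ⟨hci ▸ hgi, hci.symm⟩
    · refine Or.inr ⟨hc, some ⟨w, fun hwi => elimFT hc ((hwi.symm.trans hw) ▸ hgi)⟩, hw, ?_⟩
      exact ⟨u, hu, hadj⟩
  · rintro (⟨-, h⟩ | ⟨hc, x, hx, hadj⟩)
    · refine Or.inl ?_
      have h' : i = c := h
      rw [h']
    · rcases x with _ | w
      · exact ((fuse_adj_nn φ.eval i).mp hadj).elim
      · obtain ⟨u, hu, hadj'⟩ := hadj
        exact Or.inr ⟨hc, u, w.1, hu, hx, hadj'⟩

/-- Fusing a real label: create the fused vertex now, join it to all marked partners,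
clear the marks, and give it its label together with all pending virtual partner labels. -/
lemma good_fuse_real {φ : FuseExpr k} {γ : Fin k → Bool} {i : Fin k} (hgi : γ i = true)
    (g : Good φ (gfuse γ i)) : Good (FuseExpr.fuse i φ) γ := by
  right
  rcases g with g | ⟨ψ1, w1, s⟩
  · -- no real vertices below: the fused vertex is the only real vertex
    have hreal : ∀ u : {v : φ.eval.V // φ.eval.lab v ≠ i},
        γ ((FuseExpr.fuse i φ).eval.lab (some u)) = true → False := by
      intro u h
      have hf := g u.1
      rw [gfuse_ne u.2] at hf
      exact elimFT hf h
    refine ⟨MultiExpr.intro (insert i.castSucc (pendT φ γ i)), trivial,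
      ⟨fun _ => (), fun _ => ⟨none, hgi⟩, ?_, ?_⟩, ?_, ?_, ?_⟩
    · rintro ⟨(_ | u), h⟩
      · rfl
      · exact (hreal u h).elim
    · intro x
      rfl
    · rintro ⟨(_ | u), hu⟩ ⟨(_ | v), hv⟩
      · constructor
        · intro h
          exact absurd h (by simp [MultiExpr.eval, MGraph.singleVertex])
        · intro h
          exact ((fuse_adj_nn φ.eval i).mp h).elim
      · exact (hreal v hv).elim
      · exact (hreal u hu).elim
      · exact (hreal u hu).elim
    · rintro ⟨(_ | u), hu⟩ c
      · exact pendT_spec hgi c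
      · exact (hreal u hu).elim
    · rintro ⟨(_ | u), hu⟩
      · rintro (h | h)
        · exact last_ne_castSucc i h
        · exact last_not_mem_pendT h
      · exact (hreal u hu).elim
  · -- general case
    obtain ⟨β1, a1, l1, e1⟩ := s
    have hσ1 : ∀ m : ψ1.eval.V, Fin.last k ∉ ψ1.eval.lab m := by
      intro m
      have := e1 (β1.symm m)
      rwa [β1.apply_symm_apply] at this
    have hPsome : ∀ u : {v : φ.eval.V // φ.eval.lab v ≠ i},
        (γ ((FuseExpr.fuse i φ).eval.lab (some u)) = true) ↔
          (gfuse γ i (φ.eval.lab u.1) = true) := by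
      intro u
      rw [gfuse_ne u.2]
      exact Iff.rfl
    have hi'mem : ∀ v : {v : φ.eval.V // gfuse γ i (φ.eval.lab v) = true},
        (i.castSucc ∈ ψ1.eval.lab (β1 v) ↔
          ∃ w, φ.eval.lab w = i ∧ φ.eval.G.Adj v.1 w) := by
      intro v
      refine (l1 v i).trans ⟨?_, ?_⟩
      · rintro (⟨hf, -⟩ | ⟨-, h⟩)
        · rw [gfuse_self] at hf
          exact Bool.noConfusion hf
        · exact h
      · intro h
        exact Or.inr ⟨gfuse_self γ i, h⟩
    refine ⟨MultiExpr.relabel (Fin.last k) (insert i.castSucc (pendT φ γ i))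
      (MultiExpr.relabel i.castSucc ∅
        (MultiExpr.join (Fin.last k) i.castSucc
          (MultiExpr.union ψ1 (MultiExpr.intro {Fin.last k})))), ?_, ?_⟩
    · -- well-formedness
      refine ⟨(last_ne_castSucc i), ?_, w1, trivial⟩
      rintro (m | u) ⟨h1, h2⟩
      · exact hσ1 m h1
      · exact last_ne_castSucc i h2.symm
    · -- the simulation
      refine ⟨⟨fun x => match x with
          | ⟨some u, h⟩ => Sum.inl (β1 ⟨u.1, (hPsome u).mp h⟩)
          | ⟨none, _⟩ => Sum.inr (),
        fun y => match y with
          | Sum.inl m => ⟨some ⟨(β1.symm m).1, fun hlab => by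
              have h2 := (β1.symm m).2
              rw [hlab, gfuse_self] at h2
              exact Bool.noConfusion h2⟩, (hPsome _).mpr (β1.symm m).2⟩
          | Sum.inr _ => ⟨none, hgi⟩, ?_, ?_⟩, ?_, ?_, ?_⟩
      · rintro ⟨(_ | u), h⟩
        · rfl
        · apply Subtype.ext
          have hx := β1.symm_apply_apply ⟨u.1, (hPsome u).mp h⟩
          show some _ = some u
          congr 1
          have hv : (β1.symm (β1 ⟨u.1, (hPsome u).mp h⟩)).1 = u.1 := congrArg Subtype.val hx
          exact Subtype.ext hv
      · rintro (m | u)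
        · exact congrArg Sum.inl (β1.apply_symm_apply m)
        · rfl
      · -- adjacency
        rintro ⟨(_ | u), hu⟩ ⟨(_ | v), hv⟩
        · constructor
          · rintro (h | ⟨hne, -⟩)
            · exact (show False from h).elim
            · exact absurd rfl hne
          · intro h
            exact ((fuse_adj_nn φ.eval i).mp h).elim
        · constructor
          · rintro (h | ⟨-, ⟨-, hiy⟩ | ⟨hix, -⟩⟩)
            · exact (SimpleGraph.not_adj_sum_inl_inr _ _ h.symm).elim
            · obtain ⟨w, hw, hadj⟩ := (hi'mem _).mp hiy
              exact ⟨w, hw, hadj.symm⟩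
            · exact (last_ne_castSucc i hix.symm).elim
          · rintro ⟨w, hw, hadj⟩
            exact Or.inr ⟨Sum.inr_ne_inl, Or.inl ⟨rfl, (hi'mem _).mpr ⟨w, hw, hadj.symm⟩⟩⟩
        · constructor
          · rintro (h | ⟨-, ⟨hσx, -⟩ | ⟨hix, -⟩⟩)
            · exact (SimpleGraph.not_adj_sum_inl_inr _ _ h).elim
            · exact absurd hσx (hσ1 _)
            · exact (hi'mem _).mp hix
          · intro h
            exact Or.inr ⟨Sum.inl_ne_inr, Or.inr ⟨(hi'mem _).mpr h, rfl⟩⟩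
        · constructor
          · rintro (h | ⟨-, ⟨hσx, -⟩ | ⟨-, hσy⟩⟩)
            · exact (a1 _ _).mp h
            · exact absurd hσx (hσ1 _)
            · exact absurd hσy (hσ1 _)
          · intro h
            exact Or.inl ((a1 ⟨u.1, (hPsome u).mp hu⟩ ⟨v.1, (hPsome v).mp hv⟩).mpr h)
      · -- labels
        rintro ⟨(_ | u), hu⟩ c
        · exact (fuseM_lab_inr ψ1.eval i _ () c.castSucc).trans (pendT_spec hgi c)
        · refine (fuseM_lab_inl ψ1.eval i _ hσ1 (β1 ⟨u.1, (hPsome u).mp hu⟩) c).trans ?_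
          rcases eq_or_ne c i with rfl | hci
          · constructor
            · rintro ⟨-, hne⟩
              exact absurd rfl hne
            · rintro (⟨-, hlabI⟩ | ⟨hf, -⟩)
              · exact absurd hlabI u.2
              · exact elimFT hf hgi
          · have hl := l1 ⟨u.1, (hPsome u).mp hu⟩ c
            constructor
            · rintro ⟨h1, -⟩
              rcases hl.mp h1 with ⟨ht, h2⟩ | ⟨hf, w, hw, hadj⟩
              · exact Or.inl ⟨(gfuse_ne (γ := γ) hci) ▸ ht, h2⟩
              · exact Or.inr ⟨(gfuse_ne (γ := γ) hci) ▸ hf,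
                  some ⟨w, fun hwi => hci (hw.symm.trans hwi)⟩, hw, hadj⟩
            · rintro (⟨ht, h2⟩ | ⟨hf, x, hx, hadj⟩)
              · exact ⟨hl.mpr (Or.inl ⟨(gfuse_ne (γ := γ) hci).symm ▸ ht, h2⟩), hci⟩
              · rcases x with _ | w
                · exact absurd (show i = c from hx) (Ne.symm hci)
                · exact ⟨hl.mpr (Or.inr ⟨(gfuse_ne (γ := γ) hci).symm ▸ hf, w.1, hx, hadj⟩), hci⟩
      · -- the spare label is never used
        intro v
        refine fuseM_lab_last ψ1.eval i _ hσ1 ?_ _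
        rintro (h | h)
        · exact last_ne_castSucc i h
        · exact last_not_mem_pendT h

end FuseRealCase

section Master

variable {k : ℕ}

lemma eval_nonempty (φ : FuseExpr k) : Nonempty φ.eval.V := by
  induction φ with
  | intro i => exact ⟨PUnit.unit⟩
  | union φ1 φ2 ih1 ih2 => exact ⟨Sum.inl ih1.some⟩
  | join i j φ ih => exact ih
  | relabel i j φ ih => exact ih
  | fuse i φ ih => exact ⟨none⟩

theorem good_all (φ : FuseExpr k) (h : φ.WF) : ∀ γ : Fin k → Bool, Good φ γ := by
  induction φ with
  | intro i => exact fun γ => good_intro i γ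
  | union φ1 φ2 ih1 ih2 => exact fun γ => good_union (ih1 h.1 γ) (ih2 h.2 γ)
  | join i j φ ih => exact fun γ => good_join h.1 (ih h.2 γ)
  | relabel i j φ ih => exact fun γ => good_relabel h.1 (ih h.2 (gswap γ i j))
  | fuse i φ ih =>
    intro γ
    cases hgi : γ i with
    | false => exact good_fuse_ghost hgi (ih h.1 γ)
    | true => exact good_fuse_real hgi (ih h.1 (gfuse γ i))

theorem part1 {V : Type} (G : SimpleGraph V) (k : ℕ) :
    FuseAdmits k G → MultiAdmits (k + 1) G := by
  rintro ⟨φ, hwf, ⟨iso⟩⟩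
  rcases good_all φ hwf (fun _ => true) with hleft | ⟨ψ, wψ, β, hadj, -, -⟩
  · obtain ⟨v⟩ := eval_nonempty φ
    exact absurd (hleft v) (by simp)
  · refine ⟨ψ, wψ, ⟨?_⟩⟩
    refine (⟨β.symm.trans
      ⟨fun x => x.1, fun v => ⟨v, rfl⟩, fun x => rfl, fun v => rfl⟩, ?_⟩ :
        ψ.eval.G ≃g φ.eval.G).trans iso
    intro a b
    have h := hadj (β.symm a) (β.symm b)
    rw [β.apply_symm_apply, β.apply_symm_apply] at h
    exact h.symm

end Master

section Construction

variable {k : ℕ}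

lemma fuseExpr_zero_elim (φ : FuseExpr 0) : False := by
  induction φ with
  | intro i => exact i.elim0
  | union φ1 φ2 ih1 ih2 => exact ih1
  | join i j φ ih => exact ih
  | relabel i j φ ih => exact ih
  | fuse i φ ih => exact ih

lemma multi_eval_nonempty (ψ : MultiExpr k) : Nonempty ψ.eval.V := by
  induction ψ with
  | intro S => exact ⟨PUnit.unit⟩
  | union ψ1 ψ2 ih1 ih2 => exact ⟨Sum.inl ih1.some⟩
  | join i j ψ ih => exact ih
  | relabel i S ψ ih => exact ih

/-- `PUnit ⊕ Fin (n+1) ≃ Fin (n+2)`, the new summand going to `0`. -/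
def sumFinEquiv (n : ℕ) : PUnit ⊕ Fin (n + 1) ≃ Fin (n + 2) where
  toFun := Sum.elim (fun _ => 0) Fin.succ
  invFun := fun q => Fin.cases (Sum.inl PUnit.unit) (fun p => Sum.inr p) q
  left_inv := by rintro (u | a) <;> simp
  right_inv := by
    intro q
    induction q using Fin.cases <;> simp

/-- An expression building `n+1` isolated vertices with labels `f 0, …, f n`. -/
def baseE : (n : ℕ) → (Fin (n + 1) → Fin k) → FuseExpr k
  | 0, f => .intro (f 0)
  | n + 1, f => .union (.intro (f 0)) (baseE n (f ∘ Fin.succ))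

lemma baseE_spec : ∀ (n : ℕ) (f : Fin (n + 1) → Fin k),
    (baseE n f).WF ∧ ∃ β : (baseE n f).eval.V ≃ Fin (n + 1),
      (∀ x, (baseE n f).eval.lab x = f (β x)) ∧ (∀ x y, ¬ (baseE n f).eval.G.Adj x y) := by
  intro n
  induction n with
  | zero =>
    intro f
    refine ⟨trivial, ⟨fun _ => 0, fun _ => PUnit.unit, fun x => rfl,
      fun q => (Fin.fin_one_eq_zero q).symm⟩, fun x => rfl, ?_⟩
    intro x y h
    exact h
  | succ n ih =>
    intro f
    obtain ⟨wf', β', hlab', hadj'⟩ := ih (f ∘ Fin.succ)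
    refine ⟨⟨trivial, wf'⟩, (Equiv.sumCongr (Equiv.refl PUnit) β').trans (sumFinEquiv n),
      ?_, ?_⟩
    · rintro (u | a)
      · rfl
      · show (baseE n (f ∘ Fin.succ)).eval.lab a = f (Fin.succ (β' a))
        rw [hlab' a]
        rfl
    · rintro (u | a) (v | b) h
      · exact h
      · exact SimpleGraph.not_adj_sum_inl_inr _ _ h
      · exact SimpleGraph.not_adj_sum_inl_inr _ _ h.symm
      · exact hadj' a b h

/-- Fold join operations over a list of label pairs. -/
def joinsE (P : List (Fin k × Fin k)) (φ0 : FuseExpr k) : FuseExpr k :=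
  P.foldr (fun p acc => FuseExpr.join p.1 p.2 acc) φ0

lemma joinsE_spec {α : Type} (lab0 : α → Fin k) :
    ∀ (P : List (Fin k × Fin k)), (∀ p ∈ P, p.1 ≠ p.2) →
    ∀ (φ0 : FuseExpr k), φ0.WF →
    ∀ (β : φ0.eval.V ≃ α), (∀ x, φ0.eval.lab x = lab0 (β x)) →
    (∀ x y, ¬ φ0.eval.G.Adj x y) →
    (joinsE P φ0).WF ∧ ∃ β' : (joinsE P φ0).eval.V ≃ α,
      (∀ x, (joinsE P φ0).eval.lab x = lab0 (β' x)) ∧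
      (∀ x y, (joinsE P φ0).eval.G.Adj x y ↔ (x ≠ y ∧ ∃ p ∈ P,
        ((lab0 (β' x) = p.1 ∧ lab0 (β' y) = p.2) ∨
          (lab0 (β' x) = p.2 ∧ lab0 (β' y) = p.1)))) := by
  intro P
  induction P with
  | nil =>
    intro _ φ0 h0 β hlab hadj
    refine ⟨h0, β, hlab, fun x y => ⟨fun h => absurd h (hadj x y), ?_⟩⟩
    rintro ⟨-, p, hp, -⟩
    exact absurd hp List.not_mem_nil
  | cons p P ih =>
    intro hP φ0 h0 β hlab hadj
    obtain ⟨wf', β', hlab', hadj'⟩ :=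
      ih (fun q hq => hP q (List.mem_cons_of_mem p hq)) φ0 h0 β hlab hadj
    refine ⟨⟨hP p (List.mem_cons_self), wf'⟩, β', fun x => hlab' x, ?_⟩
    intro x y
    refine (join_adj (joinsE P φ0).eval p.1 p.2 x y).trans ?_
    constructor
    · rintro (h | ⟨hne, hp⟩)
      · obtain ⟨hne, p', hp', hm⟩ := (hadj' x y).mp h
        exact ⟨hne, p', List.mem_cons_of_mem p hp', hm⟩
      · refine ⟨hne, p, List.mem_cons_self, ?_⟩
        rcases hp with ⟨h1, h2⟩ | ⟨h1, h2⟩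
        · exact Or.inl ⟨(hlab' x) ▸ h1, (hlab' y) ▸ h2⟩
        · exact Or.inr ⟨(hlab' x) ▸ h1, (hlab' y) ▸ h2⟩
    · rintro ⟨hne, p', hp', hm⟩
      rcases List.mem_cons.mp hp' with rfl | hp'
      · refine Or.inr ⟨hne, ?_⟩
        rcases hm with ⟨h1, h2⟩ | ⟨h1, h2⟩
        · exact Or.inl ⟨(hlab' x).symm ▸ h1, (hlab' y).symm ▸ h2⟩
        · exact Or.inr ⟨(hlab' x).symm ▸ h1, (hlab' y).symm ▸ h2⟩
      · exact Or.inl ((hadj' x y).mpr ⟨hne, p', hp', hm⟩)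

lemma fuseAdmits_exists {V : Type} [Fintype V] (hne : Nonempty V) (G : SimpleGraph V) :
    ∃ n, FuseAdmits n G := by
  classical
  obtain ⟨m, hm⟩ : ∃ m, Fintype.card V = m + 1 :=
    ⟨Fintype.card V - 1, (Nat.succ_pred_eq_of_pos Fintype.card_pos).symm⟩
  refine ⟨m + 1, ?_⟩
  have e : V ≃ Fin (m + 1) := (Fintype.equivFin V).trans (finCongr hm)
  set P : List (Fin (m + 1) × Fin (m + 1)) :=
    ((List.finRange (m + 1)).product (List.finRange (m + 1))).filter
      (fun p => decide (G.Adj (e.symm p.1) (e.symm p.2))) with hPdef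
  have memP : ∀ p : Fin (m + 1) × Fin (m + 1), p ∈ P ↔ G.Adj (e.symm p.1) (e.symm p.2) := by
    intro p
    rw [hPdef, List.mem_filter]
    constructor
    · rintro ⟨-, h⟩
      exact of_decide_eq_true h
    · intro h
      refine ⟨?_, decide_eq_true h⟩
      have : (p.1, p.2) ∈ (List.finRange (m + 1)).product (List.finRange (m + 1)) := by
        rw [List.pair_mem_product]
        exact ⟨List.mem_finRange _, List.mem_finRange _⟩
      simpa using this
  have hPne : ∀ p ∈ P, p.1 ≠ p.2 := by
    intro p hp heq
    have h := (memP p).mp hp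
    rw [heq] at h
    exact G.irrefl h
  obtain ⟨wf0, β0, hlab0, hadj0⟩ := baseE_spec m (id : Fin (m + 1) → Fin (m + 1))
  obtain ⟨wfJ, βJ, hlabJ, hadjJ⟩ := joinsE_spec id P hPne _ wf0 β0 hlab0 hadj0
  refine ⟨joinsE P (baseE m id), wfJ, ⟨⟨βJ.trans e.symm, ?_⟩⟩⟩
  intro a b
  rw [hadjJ a b]
  constructor
  · intro h
    refine ⟨?_, (βJ a, βJ b), (memP _).mpr h, Or.inl ⟨rfl, rfl⟩⟩
    intro hab
    rw [hab] at h
    exact G.irrefl h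
  · rintro ⟨hne, p, hp, ⟨h1, h2⟩ | ⟨h1, h2⟩⟩
    · have h := (memP p).mp hp
      rw [← h1, ← h2] at h
      exact h
    · have h := (memP p).mp hp
      rw [← h1, ← h2] at h
      exact h.symm

end Construction

end FWProof

/-- If a finite simple graph `G` admits a fuse-`k`-expression (`k ≥ 1`),
then it admits a multi-`(k+1)`-expression; consequently `mcw(G) ≤ fw(G) + 1`. -/
theorem mcw_le_fw_add_one :
    (∀ (V : Type) [Fintype V] (G : SimpleGraph V) (k : ℕ), 1 ≤ k →
      FuseAdmits k G → MultiAdmits (k + 1) G) ∧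
    (∀ (V : Type) [Fintype V] (G : SimpleGraph V), mcw G ≤ fw G + 1) := by
  constructor
  · intro V _ G k _ hF
    exact FWProof.part1 G k hF
  · intro V _ G
    by_cases hS : {k | FuseAdmits k G}.Nonempty
    · have hmem : FuseAdmits (fw G) G := Nat.sInf_mem hS
      exact Nat.sInf_le (FWProof.part1 G _ hmem)
    · have hempty : {k | MultiAdmits k G} = ∅ := by
        rw [Set.eq_empty_iff_forall_notMem]
        intro m hm
        obtain ⟨ψ, -, ⟨iso⟩⟩ := hm
        obtain ⟨n, hn⟩ :=
          FWProof.fuseAdmits_exists ⟨iso (FWProof.multi_eval_nonempty ψ).some⟩ G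
        exact hS ⟨n, hn⟩
      show sInf {k | MultiAdmits k G} ≤ _
      rw [hempty, Nat.sInf_empty]
      exact Nat.zero_le _
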